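/- arXiv:2308.09252 — 2 statements merged into one kernel-verified Lean document; each statement's English description precedes it below -/
import Mathlib

section
/- For bounded linear operators B and C on a complex Hilbert space H, w_e(B,C) ≤ (1/2)·‖B*B + C*C‖^{1/2} + (1/(2√2))·(w(B+C)² + w(B−C)²)^{1/2}. -/
open ContinuousLinearMap

noncomputable def nr {E : Type*} [NormedAddCommGroup E] [InnerProductSpace ℂ E]
    (T : E →L[ℂ] E) : ℝ :=
  sSup {r : ℝ | ∃ x : E, ‖x‖ = 1 ∧ r = ‖(inner ℂ (T x) x : ℂ)‖}

noncomputable def er {E : Type*} [NormedAddCommGroup E] [InnerProductSpace ℂ E]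
    (B C : E →L[ℂ] E) : ℝ :=
  sSup {r : ℝ | ∃ x : E, ‖x‖ = 1 ∧
    r = Real.sqrt (‖(inner ℂ (B x) x : ℂ)‖ ^ 2 + ‖(inner ℂ (C x) x : ℂ)‖ ^ 2)}

lemma abs_inner_le_opNorm {E : Type*} [NormedAddCommGroup E] [InnerProductSpace ℂ E]
    (T : E →L[ℂ] E) (x : E) (hx : ‖x‖ = 1) :
    ‖(inner ℂ (T x) x : ℂ)‖ ≤ ‖T‖ := by
  calc ‖(inner ℂ (T x) x : ℂ)‖ = ‖(inner ℂ (T x) x : ℂ)‖ := rfl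
    _ ≤ ‖T x‖ * ‖x‖ := norm_inner_le_norm _ _
    _ ≤ ‖T‖ * ‖x‖ * ‖x‖ := by
        have := T.le_opNorm x
        nlinarith [norm_nonneg x]
    _ = ‖T‖ := by rw [hx]; ring

lemma abs_inner_le_nr {E : Type*} [NormedAddCommGroup E] [InnerProductSpace ℂ E]
    (T : E →L[ℂ] E) (x : E) (hx : ‖x‖ = 1) :
    ‖(inner ℂ (T x) x : ℂ)‖ ≤ nr T := by
  apply le_csSup
  · refine ⟨‖T‖, ?_⟩
    rintro r ⟨y, hy, rfl⟩
    exact abs_inner_le_opNorm T y hy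
  · exact ⟨x, hx, rfl⟩

theorem stmt_9 {H : Type*} [NormedAddCommGroup H] [InnerProductSpace ℂ H] [CompleteSpace H]
    (B C : H →L[ℂ] H) :
    er B C ≤ (1 / 2) * ‖adjoint B * B + adjoint C * C‖ ^ ((1 : ℝ) / 2)
      + (1 / (2 * Real.sqrt 2)) * (nr (B + C) ^ 2 + nr (B - C) ^ 2) ^ ((1 : ℝ) / 2) := by
  set S : H →L[ℂ] H := adjoint B * B + adjoint C * C with hS
  set A : ℝ := ‖S‖ with hA
  have hA0 : (0:ℝ) ≤ A := norm_nonneg _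
  have hN0 : (0:ℝ) ≤ nr (B + C) ^ 2 + nr (B - C) ^ 2 := by positivity
  have hs2 : (0:ℝ) < Real.sqrt 2 := Real.sqrt_pos.mpr (by norm_num)
  have hrhs0 : (0:ℝ) ≤ (1 / 2) * A ^ ((1 : ℝ) / 2)
      + (1 / (2 * Real.sqrt 2)) * (nr (B + C) ^ 2 + nr (B - C) ^ 2) ^ ((1 : ℝ) / 2) := by
    have h1 : (0:ℝ) ≤ A ^ ((1:ℝ)/2) := Real.rpow_nonneg hA0 _
    have h2 : (0:ℝ) ≤ (nr (B + C) ^ 2 + nr (B - C) ^ 2) ^ ((1:ℝ)/2) := Real.rpow_nonneg hN0 _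
    positivity
  apply Real.sSup_le _ hrhs0
  rintro r ⟨x, hx, rfl⟩
  set β : ℂ := inner ℂ (B x) x with hβ
  set γ : ℂ := inner ℂ (C x) x with hγ
  -- Bound 1: |β|² + |γ|² ≤ A
  have hBx : ‖β‖ ≤ ‖B x‖ := by
    calc ‖β‖ = ‖β‖ := rfl
      _ ≤ ‖B x‖ * ‖x‖ := norm_inner_le_norm _ _
      _ = ‖B x‖ := by rw [hx, mul_one]
  have hCx : ‖γ‖ ≤ ‖C x‖ := by
    calc ‖γ‖ = ‖γ‖ := rfl
      _ ≤ ‖C x‖ * ‖x‖ := norm_inner_le_norm _ _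
      _ = ‖C x‖ := by rw [hx, mul_one]
  have hkey : ‖B x‖ ^ 2 + ‖C x‖ ^ 2 ≤ A := by
    have heq : (‖B x‖ ^ 2 + ‖C x‖ ^ 2 : ℝ) = Complex.re (inner ℂ (S x) x : ℂ) := by
      have h1 : (inner ℂ ((adjoint B) (B x)) x : ℂ) = inner ℂ (B x) (B x) :=
        adjoint_inner_left B x (B x)
      have h2 : (inner ℂ ((adjoint C) (C x)) x : ℂ) = inner ℂ (C x) (C x) :=
        adjoint_inner_left C x (C x)
      simp only [hS, ContinuousLinearMap.add_apply, ContinuousLinearMap.mul_apply,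
        inner_add_left, Complex.add_re, h1, h2]
      rw [inner_self_eq_norm_sq_to_K (𝕜 := ℂ) (B x), inner_self_eq_norm_sq_to_K (𝕜 := ℂ) (C x)]
      simp [← Complex.ofReal_pow]
    have hle : Complex.re (inner ℂ (S x) x : ℂ) ≤ A := by
      calc Complex.re (inner ℂ (S x) x : ℂ) ≤ ‖(inner ℂ (S x) x : ℂ)‖ :=
            Complex.re_le_norm _
        _ ≤ ‖S‖ := abs_inner_le_opNorm S x hx
    linarith [heq ▸ hle]
  have hb1 : Real.sqrt (‖β‖ ^ 2 + ‖γ‖ ^ 2) ≤ Real.sqrt A := by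
    apply Real.sqrt_le_sqrt
    nlinarith [norm_nonneg β, norm_nonneg γ, norm_nonneg (B x), norm_nonneg (C x)]
  -- Bound 2
  have hpar : ‖β + γ‖ ^ 2 + ‖β - γ‖ ^ 2
      = 2 * (‖β‖ ^ 2 + ‖γ‖ ^ 2) := by
    simp only [Complex.sq_norm, Complex.normSq_add, Complex.normSq_sub]; ring
  have hnp : ‖β + γ‖ ≤ nr (B + C) := by
    have h := abs_inner_le_nr (B + C) x hx
    rwa [show (inner ℂ ((B + C) x) x : ℂ) = β + γ by
      simp [ContinuousLinearMap.add_apply, inner_add_left, hβ, hγ]] at h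
  have hnm : ‖β - γ‖ ≤ nr (B - C) := by
    have h := abs_inner_le_nr (B - C) x hx
    rwa [show (inner ℂ ((B - C) x) x : ℂ) = β - γ by
      simp [ContinuousLinearMap.sub_apply, inner_sub_left, hβ, hγ]] at h
  have hb2 : Real.sqrt 2 * Real.sqrt (‖β‖ ^ 2 + ‖γ‖ ^ 2)
      ≤ Real.sqrt (nr (B + C) ^ 2 + nr (B - C) ^ 2) := by
    rw [← Real.sqrt_mul (by norm_num) _]
    apply Real.sqrt_le_sqrt
    rw [← hpar]
    nlinarith [norm_nonneg (β + γ), norm_nonneg (β - γ)]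
  have hb2' : Real.sqrt (‖β‖ ^ 2 + ‖γ‖ ^ 2)
      ≤ (1 / Real.sqrt 2) * Real.sqrt (nr (B + C) ^ 2 + nr (B - C) ^ 2) := by
    rw [div_mul_eq_mul_div, le_div_iff₀ hs2, one_mul, mul_comm]
    exact hb2
  have hsum : Real.sqrt (‖β‖ ^ 2 + ‖γ‖ ^ 2)
      ≤ (1/2) * Real.sqrt A
        + (1 / (2 * Real.sqrt 2)) * Real.sqrt (nr (B + C) ^ 2 + nr (B - C) ^ 2) := by
    have : (1 : ℝ) / (2 * Real.sqrt 2) = (1/2) * (1 / Real.sqrt 2) := by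
      field_simp
    rw [this]
    nlinarith [hb1, hb2']
  calc Real.sqrt (‖β‖ ^ 2 + ‖γ‖ ^ 2)
      ≤ (1/2) * Real.sqrt A
        + (1 / (2 * Real.sqrt 2)) * Real.sqrt (nr (B + C) ^ 2 + nr (B - C) ^ 2) := hsum
    _ = (1 / 2) * A ^ ((1 : ℝ) / 2)
        + (1 / (2 * Real.sqrt 2)) * (nr (B + C) ^ 2 + nr (B - C) ^ 2) ^ ((1 : ℝ) / 2) := by
        rw [← Real.sqrt_eq_rpow, ← Real.sqrt_eq_rpow]
end

section
/- If the numerical radius of T equals (1/2)‖T‖ + (1/2)·|‖Re(T)‖ − ‖Im(T)‖|, then ‖T‖ = ‖Re(T)‖ + ‖Im(T)‖ and w(T) = max{‖Re(T)‖, ‖Im(T)‖}. -/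
open ContinuousLinearMap

lemma selfadj_norm_le {H : Type*} [NormedAddCommGroup H] [InnerProductSpace ℂ H] [CompleteSpace H]
    (A : H →L[ℂ] H) (hA : adjoint A = A) {M : ℝ} (hM : 0 ≤ M)
    (hb : ∀ x : H, ‖x‖ = 1 → ‖(inner ℂ (A x) x : ℂ)‖ ≤ M) : ‖A‖ ≤ M := by
  -- extend bound to all x
  have habs : ∀ x : H, ‖(inner ℂ (A x) x : ℂ)‖ ≤ M * ‖x‖ ^ 2 := by
    intro x
    rcases eq_or_ne x 0 with rfl | hx
    · simp
    · have hnx : (‖x‖ : ℝ) ≠ 0 := norm_ne_zero_iff.2 hx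
      set c : ℂ := ((‖x‖ : ℝ) : ℂ)⁻¹ with hc
      have hcy : ‖c • x‖ = 1 := by
        simp [hc, norm_smul, inv_mul_cancel₀ hnx]
      have h2 := hb _ hcy
      have hinner : (inner ℂ (A (c • x)) (c • x) : ℂ)
          = (starRingEnd ℂ) c * (c * (inner ℂ (A x) x : ℂ)) := by
        rw [map_smul, inner_smul_left, inner_smul_right]
      rw [hinner] at h2
      have hcabs : ‖c‖ = ‖x‖⁻¹ := by
        simp [hc, abs_of_nonneg (norm_nonneg x)]
      rw [norm_mul, norm_mul, Complex.norm_conj, hcabs] at h2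
      have : ‖x‖⁻¹ * ‖x‖⁻¹ * ‖(inner ℂ (A x) x : ℂ)‖ ≤ M := by
        linarith [h2]
      have hpos : (0:ℝ) < ‖x‖ := lt_of_le_of_ne (norm_nonneg x) (Ne.symm hnx)
      have hone : ‖x‖⁻¹ * ‖x‖⁻¹ * ‖x‖ ^ 2 = 1 := by
        field_simp
      have habs' : ‖(inner ℂ (A x) x : ℂ)‖
          = (‖x‖⁻¹ * ‖x‖⁻¹ * ‖(inner ℂ (A x) x : ℂ)‖) * ‖x‖ ^ 2 := by
        rw [show (‖x‖⁻¹ * ‖x‖⁻¹ * ‖(inner ℂ (A x) x : ℂ)‖) * ‖x‖ ^ 2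
            = (‖x‖⁻¹ * ‖x‖⁻¹ * ‖x‖ ^ 2) * ‖(inner ℂ (A x) x : ℂ)‖ from by ring,
          hone, one_mul]
      rw [habs']
      exact mul_le_mul_of_nonneg_right this (sq_nonneg _)
  -- polarization bound on Re⟪Ax, y⟫
  have hre : ∀ x y : H, ((inner ℂ (A x) y : ℂ)).re ≤ (M / 2) * (‖x‖ ^ 2 + ‖y‖ ^ 2) := by
    intro x y
    have hsym : (inner ℂ (A y) x : ℂ) = (starRingEnd ℂ) (inner ℂ (A x) y : ℂ) := by
      conv_lhs => rw [← hA]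
      rw [adjoint_inner_left, ← inner_conj_symm]
    have e : (inner ℂ (A (x + y)) (x + y) : ℂ) - (inner ℂ (A (x - y)) (x - y) : ℂ)
        = 2 * (inner ℂ (A x) y : ℂ) + 2 * (inner ℂ (A y) x : ℂ) := by
      simp only [map_add, map_sub, inner_add_left, inner_add_right, inner_sub_left,
        inner_sub_right]
      ring
    rw [hsym] at e
    have ere := congrArg Complex.re e
    simp only [Complex.sub_re, Complex.add_re, Complex.mul_re, Complex.re_ofNat,
      Complex.im_ofNat, Complex.conj_re, Complex.conj_im] at ere
    have h1 : (inner ℂ (A (x + y)) (x + y) : ℂ).re ≤ M * ‖x + y‖ ^ 2 :=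
      le_trans (Complex.re_le_norm _) (habs _)
    have h2 : -(M * ‖x - y‖ ^ 2) ≤ (inner ℂ (A (x - y)) (x - y) : ℂ).re := by
      have := Complex.abs_re_le_norm (inner ℂ (A (x - y)) (x - y) : ℂ)
      have := habs (x - y)
      have := neg_abs_le (inner ℂ (A (x - y)) (x - y) : ℂ).re
      linarith
    have hp := parallelogram_law_with_norm ℂ x y
    nlinarith [sq_nonneg (‖x+y‖), sq_nonneg (‖x-y‖)]
  refine opNorm_le_bound A hM fun x => ?_
  rcases eq_or_ne (A x) 0 with h0 | h0
  · rw [h0]; simpa using mul_nonneg hM (norm_nonneg x)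
  · have hAx : (0:ℝ) < ‖A x‖ := norm_pos_iff.2 h0
    set c : ℝ := ‖x‖ / ‖A x‖ with hc
    have hcn : 0 ≤ c := div_nonneg (norm_nonneg x) (norm_nonneg _)
    set y : H := ((c : ℂ)) • A x with hy
    have hny : ‖y‖ = ‖x‖ := by
      simp [hy, norm_smul, abs_of_nonneg hcn, hc, div_mul_cancel₀ _ (ne_of_gt hAx)]
    have hrei : ((inner ℂ (A x) y : ℂ)).re = ‖x‖ * ‖A x‖ := by
      rw [hy, inner_smul_right]
      have : ((c:ℂ) * (inner ℂ (A x) (A x) : ℂ)).re = c * (inner ℂ (A x) (A x) : ℂ).re := by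
        simp [Complex.re_ofReal_mul]
      have h4 : (inner ℂ (A x) (A x) : ℂ).re = ‖A x‖ ^ 2 := by
        have h5 := @inner_self_eq_norm_sq ℂ _ _ _ _ (A x)
        simpa [RCLike.re_to_complex] using h5
      rw [this, h4, hc]
      field_simp
    have := hre x y
    rw [hrei, hny] at this
    have hx0 : (0:ℝ) < ‖x‖ := by
      rcases eq_or_ne x 0 with rfl | hxx
      · exact absurd (map_zero A) h0
      · exact norm_pos_iff.2 hxx
    nlinarith


theorem stmt_16 {H : Type*} [NormedAddCommGroup H] [InnerProductSpace ℂ H] [CompleteSpace H]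
    (T : H →L[ℂ] H)
    (h : nr T = (1 / 2) * ‖T‖
      + (1 / 2) * |‖(2 : ℂ)⁻¹ • (T + adjoint T)‖ - ‖(2 * Complex.I)⁻¹ • (T - adjoint T)‖|) :
    ‖T‖ = ‖(2 : ℂ)⁻¹ • (T + adjoint T)‖ + ‖(2 * Complex.I)⁻¹ • (T - adjoint T)‖ ∧
    nr T = max ‖(2 : ℂ)⁻¹ • (T + adjoint T)‖ ‖(2 * Complex.I)⁻¹ • (T - adjoint T)‖ := by
  set A : H →L[ℂ] H := (2 : ℂ)⁻¹ • (T + adjoint T) with hAdef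
  set B : H →L[ℂ] H := (2 * Complex.I)⁻¹ • (T - adjoint T) with hBdef
  -- the defining set of nr T is bounded above by ‖T‖
  have hbdd : BddAbove {r : ℝ | ∃ x : H, ‖x‖ = 1 ∧ r = ‖(inner ℂ (T x) x : ℂ)‖} := by
    refine ⟨‖T‖, ?_⟩
    rintro r ⟨x, hx, rfl⟩
    calc ‖(inner ℂ (T x) x : ℂ)‖ ≤ ‖T x‖ * ‖x‖ := by
          simpa using norm_inner_le_norm (𝕜 := ℂ) (T x) x
      _ ≤ ‖T‖ := by
          have := T.le_opNorm x
          rw [hx] at this ⊢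
          simpa using this
  have hle : ∀ x : H, ‖x‖ = 1 → ‖(inner ℂ (T x) x : ℂ)‖ ≤ nr T := by
    intro x hx
    exact le_csSup hbdd ⟨x, hx, rfl⟩
  have hnr0 : 0 ≤ nr T :=
    Real.sSup_nonneg (by rintro r ⟨x, hx, rfl⟩; exact norm_nonneg _)
  have hconj : ∀ x : H, (inner ℂ (adjoint T x) x : ℂ) = (starRingEnd ℂ) (inner ℂ (T x) x : ℂ) := by
    intro x
    rw [adjoint_inner_left, ← inner_conj_symm]
  -- quadratic forms of A and B
  have hAq : ∀ x : H, (inner ℂ (A x) x : ℂ) = (((inner ℂ (T x) x : ℂ).re : ℝ) : ℂ) := by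
    intro x
    have h1 : (inner ℂ (A x) x : ℂ)
        = (starRingEnd ℂ) (2 : ℂ)⁻¹ * ((inner ℂ (T x) x : ℂ) + (starRingEnd ℂ) (inner ℂ (T x) x : ℂ)) := by
      simp only [hAdef, coe_smul', Pi.smul_apply, add_apply, inner_smul_left, inner_add_left,
        hconj x]
    rw [h1, Complex.add_conj]
    have hc2 : (starRingEnd ℂ) (2 : ℂ)⁻¹ = (2 : ℂ)⁻¹ := by
      simp [Complex.ext_iff]
    rw [hc2]
    push_cast
    ring
  have hBq : ∀ x : H, (inner ℂ (B x) x : ℂ) = ((-(inner ℂ (T x) x : ℂ).im : ℝ) : ℂ) := by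
    intro x
    have h1 : (inner ℂ (B x) x : ℂ)
        = (starRingEnd ℂ) (2 * Complex.I)⁻¹ * ((inner ℂ (T x) x : ℂ) - (starRingEnd ℂ) (inner ℂ (T x) x : ℂ)) := by
      simp only [hBdef, coe_smul', Pi.smul_apply, sub_apply, inner_smul_left, inner_sub_left,
        hconj x]
    rw [h1]
    have hc2 : (starRingEnd ℂ) (2 : ℂ) = 2 := by simp [Complex.ext_iff]
    have h2 : (starRingEnd ℂ) (2 * Complex.I)⁻¹ = -(2 * Complex.I)⁻¹ := by
      rw [map_inv₀, map_mul, hc2, Complex.conj_I, mul_neg, inv_neg]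
    rw [h2, Complex.sub_conj]
    have h3 : (2 * Complex.I) ≠ 0 := by simp [Complex.I_ne_zero]
    field_simp
    push_cast
    ring
  -- self-adjointness
  have hadjA : adjoint A = A := by
    rw [hAdef, map_smulₛₗ, map_add, adjoint_adjoint]
    have hc2 : (starRingEnd ℂ) (2 : ℂ)⁻¹ = (2 : ℂ)⁻¹ := by simp [Complex.ext_iff]
    rw [hc2, add_comm]
  have hadjB : adjoint B = B := by
    rw [hBdef, map_smulₛₗ, map_sub, adjoint_adjoint]
    have hc2 : (starRingEnd ℂ) (2 : ℂ) = 2 := by simp [Complex.ext_iff]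
    have h2 : (starRingEnd ℂ) (2 * Complex.I)⁻¹ = -(2 * Complex.I)⁻¹ := by
      rw [map_inv₀, map_mul, hc2, Complex.conj_I, mul_neg, inv_neg]
    rw [h2, neg_smul, ← smul_neg, neg_sub]
  -- norms bounded by nr T
  have hA_le : ‖A‖ ≤ nr T := by
    refine selfadj_norm_le A hadjA hnr0 fun x hx => ?_
    rw [hAq x, Complex.norm_real, Real.norm_eq_abs]
    exact le_trans (Complex.abs_re_le_norm _) (hle x hx)
  have hB_le : ‖B‖ ≤ nr T := by
    refine selfadj_norm_le B hadjB hnr0 fun x hx => ?_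
    rw [hBq x, Complex.norm_real, Real.norm_eq_abs, abs_neg]
    exact le_trans (Complex.abs_im_le_norm _) (hle x hx)
  -- Cartesian decomposition
  have hdecomp : T = A + Complex.I • B := by
    rw [hAdef, hBdef, smul_smul]
    have h2 : Complex.I * (2 * Complex.I)⁻¹ = (2 : ℂ)⁻¹ := by
      field_simp
    rw [h2]
    module
  have hT_le : ‖T‖ ≤ ‖A‖ + ‖B‖ := by
    calc ‖T‖ = ‖A + Complex.I • B‖ := by rw [← hdecomp]
      _ ≤ ‖A‖ + ‖Complex.I • B‖ := norm_add_le _ _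
      _ = ‖A‖ + ‖B‖ := by
          simp [norm_smul]
  have hmax_eq : max ‖A‖ ‖B‖ = (1/2) * (‖A‖ + ‖B‖) + (1/2) * |‖A‖ - ‖B‖| := by
    rcases le_total ‖A‖ ‖B‖ with hc | hc
    · rw [max_eq_right hc, abs_of_nonpos (sub_nonpos.2 hc)]; ring
    · rw [max_eq_left hc, abs_of_nonneg (sub_nonneg.2 hc)]; ring
  have hmax_le : max ‖A‖ ‖B‖ ≤ nr T := max_le hA_le hB_le
  have hT_ge : ‖A‖ + ‖B‖ ≤ ‖T‖ := by
    rw [hmax_eq] at hmax_le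
    rw [h] at hmax_le
    linarith
  have hTeq : ‖T‖ = ‖A‖ + ‖B‖ := le_antisymm hT_le hT_ge
  refine ⟨hTeq, ?_⟩
  rw [h, hTeq, hmax_eq]
end
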